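/- arXiv:1402.0643 — 2 statements merged into one kernel-verified Lean document; each statement's English description precedes it below -/
import Mathlib

section
/- Let K be a field, Q a polynomial in K[X, Y_1, ..., Y_s] with Q = Σ_j Q_j Y^j (coefficients in K[X]), and suppose Q(0, 0, ..., 0) = 0 with multiplicity at least m, meaning Q has only monomials of total degree at least m. Then for every multi-index i with |i| < m and every tuple R = (R_1,...,R_s) of polynomials in K[X] each divisible by X, the polynomial X^{m-|i|} divides Q^{[i]}(X, R), where Q^{[i]} is the order-i Hasse derivative with respect to Y. -/
/-- The order-`i` Hasse derivative with respect to the variables `Y_1,...,Y_s`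
of `Q = Σ_j Q_j(X) Y^j`, namely `Σ_{j ≥ i} binom(j,i) Q_j(X) Y^{j-i}`. -/
noncomputable def mvHasseDeriv {R : Type*} [CommSemiring R] {σ : Type*} (i : σ →₀ ℕ)
    (P : MvPolynomial σ R) : MvPolynomial σ R :=
  (AddMonoidAlgebra.coeff P).sum fun j c =>
    if i ≤ j then
      (∏ k ∈ i.support, Nat.choose (j k) (i k)) • MvPolynomial.monomial (j - i) c
    else 0

/-- If `Q(0,...,0) = 0` with multiplicity at least `m` (that is, `Q` has only
monomials of total degree at least `m`), then for every multi-index `i` with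
`|i| < m` and every tuple `R` of polynomials each divisible by `X`,
`X^{m-|i|}` divides `Q^{[i]}(X, R)`. -/
theorem hasse_divisibility_at_origin {K : Type*} [Field K] {s : ℕ}
    (Q : MvPolynomial (Fin s) (Polynomial K)) (m : ℕ)
    (hQ : ∀ (j : Fin s →₀ ℕ) (h : ℕ), h + (j.sum fun _ e => e) < m →
      Polynomial.coeff (MvPolynomial.coeff j Q) h = 0) :
    ∀ i : Fin s →₀ ℕ, (i.sum fun _ e => e) < m →
      ∀ R : Fin s → Polynomial K, (∀ k, Polynomial.X ∣ R k) →
        (Polynomial.X : Polynomial K) ^ (m - (i.sum fun _ e => e)) ∣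
          MvPolynomial.eval R (mvHasseDeriv i Q) := by
  intro i hi R hR
  rw [mvHasseDeriv, map_finsuppSum, Finsupp.sum]
  apply Finset.dvd_sum
  intro j hj
  by_cases hij : i ≤ j
  · simp only [if_pos hij, nsmul_eq_mul, map_mul, map_natCast, MvPolynomial.eval_monomial]
    -- divisibility of the coefficient
    have hc : (Polynomial.X : Polynomial K) ^ (m - (j.sum fun _ e => e)) ∣
        MvPolynomial.coeff j Q := by
      rw [Polynomial.X_pow_dvd_iff]
      intro d hd
      exact hQ j d (by omega)
    -- divisibility of the product part
    have hp : (Polynomial.X : Polynomial K) ^ ((j - i).sum fun _ e => e) ∣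
        (j - i).prod fun n e => R n ^ e := by
      rw [Finsupp.sum, Finsupp.prod, ← Finset.prod_pow_eq_pow_sum]
      exact Finset.prod_dvd_prod_of_dvd _ _ fun k _ => pow_dvd_pow_of_dvd (hR k) _
    have hsum : ((j - i).sum fun _ e => e) + (i.sum fun _ e => e)
        = (j.sum fun _ e => e) := by
      rw [← Finsupp.sum_add_index' (h := fun (_ : Fin s) (e : ℕ) => e)
        (fun _ => rfl) (fun _ _ _ => rfl), tsub_add_cancel_of_le hij]
    have hle : (i.sum fun _ e => e) ≤ (j.sum fun _ e => e) := by omega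
    have hmain : (Polynomial.X : Polynomial K) ^ (m - (i.sum fun _ e => e)) ∣
        MvPolynomial.coeff j Q * (j - i).prod fun n e => R n ^ e := by
      calc (Polynomial.X : Polynomial K) ^ (m - (i.sum fun _ e => e))
          ∣ (Polynomial.X : Polynomial K) ^
              ((m - (j.sum fun _ e => e)) + ((j - i).sum fun _ e => e)) :=
            pow_dvd_pow _ (by omega)
        _ ∣ _ := by rw [pow_add]; exact mul_dvd_mul hc hp
    exact dvd_mul_of_dvd_right hmain _
  · simp [if_neg hij]
end

section
/- Let K be a field, x_1, ..., x_n pairwise distinct elements of K, m_1, ..., m_n positive integers, and y_{i,j} ∈ K for 1 ≤ i ≤ n, 1 ≤ j ≤ s. Let R_1,...,R_s ∈ K[X] satisfy R_j(x_i) = y_{i,j} for all i, j, and let m = max_i m_i. Then a polynomial Q ∈ K[X, Y_1, ..., Y_s] vanishes at each point (x_i, y_{i,1},...,y_{i,s}) with multiplicity at least m_i (for all i = 1,...,n) if and only if for every multi-index i ∈ ℤ_{≥0}^s with |i| < m, the Hasse derivative Q^{[i]}(X, R_1,...,R_s) is divisible by the product over all r with m_r > |i| of (X - x_r)^{m_r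 - |i|}. -/
/-- The shifted polynomial `Q(X + x, Y_1 + y_1, ..., Y_s + y_s)`. -/
noncomputable def shiftPoint {K : Type*} [Field K] {s : ℕ} (x : K) (y : Fin s → K)
    (Q : MvPolynomial (Fin s) (Polynomial K)) : MvPolynomial (Fin s) (Polynomial K) :=
  MvPolynomial.eval₂
    ((MvPolynomial.C).comp (Polynomial.aeval (Polynomial.X + Polynomial.C x)).toRingHom)
    (fun k => MvPolynomial.X k + MvPolynomial.C (Polynomial.C (y k))) Q

/-- `(x, y)` is a zero of `Q` of multiplicity at least `m`. -/
def VanishesAt {K : Type*} [Field K] {s : ℕ} (Q : MvPolynomial (Fin s) (Polynomial K))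
    (x : K) (y : Fin s → K) (m : ℕ) : Prop :=
  ∀ (j : Fin s →₀ ℕ) (h : ℕ), h + (j.sum fun _ e => e) < m →
    Polynomial.coeff (MvPolynomial.coeff j (shiftPoint x y Q)) h = 0

namespace VanAux

open MvPolynomial

theorem mvHasseDeriv_monomial {R : Type*} [CommSemiring R] {σ : Type*} (i u : σ →₀ ℕ) (c : R) :
    mvHasseDeriv i (monomial u c) =
      if i ≤ u then (∏ k ∈ i.support, Nat.choose (u k) (i k)) • monomial (u - i) c else 0 := by
  unfold mvHasseDeriv
  exact sum_monomial_eq (by split_ifs <;> simp)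

theorem mvHasseDeriv_add {R : Type*} [CommSemiring R] {σ : Type*} (i : σ →₀ ℕ)
    (P Q : MvPolynomial σ R) :
    mvHasseDeriv i (P + Q) = mvHasseDeriv i P + mvHasseDeriv i Q := by
  unfold mvHasseDeriv
  rw [AddMonoidAlgebra.coeff_add]
  apply Finsupp.sum_add_index'
  · intro j; split_ifs <;> simp
  · intro j c d; split_ifs <;> simp [map_add, smul_add]

theorem mvHasseDeriv_zero {R : Type*} [CommSemiring R] {σ : Type*} (i : σ →₀ ℕ) :
    mvHasseDeriv i (0 : MvPolynomial σ R) = 0 := by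
  unfold mvHasseDeriv
  rw [AddMonoidAlgebra.coeff_zero]
  exact Finsupp.sum_zero_index

theorem mvHasseDeriv_finsetSum {R : Type*} [CommSemiring R] {σ ι : Type*} (t : Finset ι)
    (f : ι → MvPolynomial σ R) (i : σ →₀ ℕ) :
    mvHasseDeriv i (∑ v ∈ t, f v) = ∑ v ∈ t, mvHasseDeriv i (f v) := by
  classical
  induction t using Finset.induction with
  | empty => simp [mvHasseDeriv_zero]
  | insert _ _ h ih => rw [Finset.sum_insert h, Finset.sum_insert h, mvHasseDeriv_add, ih]

theorem mvHasseDeriv_map {R S : Type*} [CommSemiring R] [CommSemiring S] (f : R →+* S) {σ : Type*}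
    (i : σ →₀ ℕ) (P : MvPolynomial σ R) :
    mvHasseDeriv i (MvPolynomial.map f P) = MvPolynomial.map f (mvHasseDeriv i P) := by
  induction P using MvPolynomial.induction_on' with
  | monomial u a =>
    rw [map_monomial, mvHasseDeriv_monomial, mvHasseDeriv_monomial]
    split_ifs
    · rw [map_nsmul, map_monomial]
    · simp
  | add p q hp hq =>
    rw [map_add, mvHasseDeriv_add, mvHasseDeriv_add, map_add, hp, hq]

variable {K : Type*} [Field K] {s : ℕ}

/-- Shift of the `Y`-variables by a tuple of polynomials. -/
noncomputable def shY (T : Fin s → Polynomial K) :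
    MvPolynomial (Fin s) (Polynomial K) →ₐ[Polynomial K] MvPolynomial (Fin s) (Polynomial K) :=
  aeval fun k => X k + C (T k)

theorem shY_shY (T U : Fin s → Polynomial K) (P : MvPolynomial (Fin s) (Polynomial K)) :
    shY T (shY U P) = shY (fun k => T k + U k) P := by
  have h2 : (shY T).comp (shY U) = shY (fun k => T k + U k) := by
    unfold shY
    rw [comp_aeval]
    congr 1
    funext k
    rw [map_add, aeval_X, aeval_C, algebraMap_eq, map_add, add_assoc]
  exact DFunLike.congr_fun h2 P

theorem evalH_monomial (T : Fin s → Polynomial K) (u i : Fin s →₀ ℕ) (a : Polynomial K) :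
    MvPolynomial.eval T (mvHasseDeriv i (monomial u a)) =
      if i ≤ u then
        ((∏ t, (u t).choose (i t) : ℕ) : Polynomial K) * (a * ∏ t, T t ^ (u t - i t))
      else 0 := by
  rw [mvHasseDeriv_monomial]
  split_ifs with h
  · have h1 : ∏ k ∈ i.support, (u k).choose (i k) = ∏ t, (u t).choose (i t) :=
      Finset.prod_subset (Finset.subset_univ _) (by
        intro t _ ht
        simp [Finsupp.notMem_support_iff.mp ht])
    have h2 : (u - i).prod (fun n e => T n ^ e) = ∏ t, T t ^ (u t - i t) := by
      rw [Finsupp.prod_fintype _ _ (fun t => pow_zero _)]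
      exact Finset.prod_congr rfl (fun t _ => by rw [Finsupp.tsub_apply])
    rw [map_nsmul, eval_monomial, h1, h2, nsmul_eq_mul]
  · simp

theorem key_if (T : Fin s → Polynomial K) (a : Polynomial K) (k : Fin s) (w v : Fin s →₀ ℕ)
    (hrest : ∀ t, t ≠ k → w t ≤ v t) :
    (if w ≤ v then
        ((∏ t, (v t).choose (w t) : ℕ) : Polynomial K) * (a * ∏ t, T t ^ (v t - w t))
      else 0)
      = ((∏ t, (v t).choose (w t) : ℕ) : Polynomial K) * (a * ∏ t, T t ^ (v t - w t)) := by
  split_ifs with h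
  · rfl
  · have hk : v k < w k := by
      by_contra hk
      exact h (Finsupp.le_def.mpr fun t => by
        by_cases ht : t = k
        · subst ht; exact not_lt.mp hk
        · exact hrest t ht)
    rw [Finset.prod_eq_zero (Finset.mem_univ k) (Nat.choose_eq_zero_of_lt hk)]
    simp

theorem combine {R : Type*} [CommRing R] (x c p a : R) (n e : ℕ) :
    (if e = 0 then 0 else ((n.choose (e - 1) : R) * c) * (a * (x ^ (n - (e - 1)) * p)))
      + x * (((n.choose e : R) * c) * (a * (x ^ (n - e) * p)))
      = (((n + 1).choose e : R) * c) * (a * (x ^ (n + 1 - e) * p)) := by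
  rcases e with _ | e'
  · rw [if_pos rfl]
    simp only [Nat.choose_zero_right, Nat.cast_one, Nat.sub_zero, zero_add, pow_succ]
    ring
  · rw [if_neg (Nat.succ_ne_zero e')]
    simp only [Nat.succ_sub_one]
    rcases lt_trichotomy e' n with h | h | h
    · have h1 : n - e' = (n - (e' + 1)) + 1 := by omega
      have h2 : n + 1 - (e' + 1) = n - e' := by omega
      rw [Nat.choose_succ_succ, h2, Nat.cast_add, h1, pow_succ]
      ring
    · subst h
      rw [Nat.choose_self, Nat.choose_eq_zero_of_lt (Nat.lt_succ_self e'), Nat.choose_self]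
      simp
    · rw [Nat.choose_eq_zero_of_lt h, Nat.choose_eq_zero_of_lt (by omega : n < e' + 1),
        Nat.choose_eq_zero_of_lt (by omega : n + 1 < e' + 1)]
      simp

theorem coeff_shY_monomial (T : Fin s → Polynomial K) :
    ∀ (N : ℕ) (u : Fin s →₀ ℕ), (u.sum fun _ e => e) = N → ∀ (a : Polynomial K) (i : Fin s →₀ ℕ),
      coeff i (shY T (monomial u a)) = MvPolynomial.eval T (mvHasseDeriv i (monomial u a)) := by
  intro N
  induction N with
  | zero =>
    intro u hu a i
    have hu0 : u = 0 := by
      ext t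
      by_contra ht
      exact ht (Finset.sum_eq_zero_iff.mp hu t (Finsupp.mem_support_iff.mpr ht))
    subst hu0
    rw [← C_apply, show (shY T) (C a) = C a from by simp [shY, aeval_C, algebraMap_eq]]
    rw [C_apply, evalH_monomial, coeff_monomial]
    by_cases hi : i = 0
    · subst hi; simp
    · rw [if_neg (fun h => hi h.symm),
        if_neg (fun h => hi (by ext t; exact Nat.le_zero.mp (Finsupp.le_def.mp h t)))]
  | succ N ih =>
    intro u hu a i
    have hne : u.support.Nonempty := by
      rw [Finsupp.support_nonempty_iff]
      rintro rfl
      simp [Finsupp.sum_zero_index] at hu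
    obtain ⟨k, hk⟩ := hne
    have hku : 1 ≤ u k := Nat.one_le_iff_ne_zero.mpr (Finsupp.mem_support_iff.mp hk)
    set δ : Fin s →₀ ℕ := Finsupp.single k 1 with hδ
    have hδu : δ ≤ u := by rw [hδ, Finsupp.single_le_iff]; exact hku
    set u' := u - δ with hu'def
    have huu : u' + δ = u := tsub_add_cancel_of_le hδu
    have hδk : δ k = 1 := by simp [hδ]
    have hδt : ∀ t, t ≠ k → δ t = 0 := fun t ht => by simp [hδ, Finsupp.single_apply, Ne.symm ht]
    have hu'k : u k = u' k + 1 := by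
      rw [← huu]; simp [hδk]
    have hu't : ∀ t, t ≠ k → u t = u' t := fun t ht => by
      rw [← huu]; simp [hδt t ht]
    have hiδk : (i - δ) k = i k - 1 := by simp [Finsupp.tsub_apply, hδk]
    have hiδt : ∀ t, t ≠ k → (i - δ) t = i t := fun t ht => by
      simp [Finsupp.tsub_apply, hδt t ht]
    have hu'sum : (u'.sum fun _ e => e) = N := by
      have hadd : ((u' + δ).sum fun _ e => e) = (u'.sum fun _ e => e) + (δ.sum fun _ e => e) :=
        Finsupp.sum_add_index' (fun _ => rfl) (fun _ _ _ => rfl)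
      have hδsum : (δ.sum fun _ e => e) = 1 := by
        rw [hδ]; exact Finsupp.sum_single_index rfl
      rw [huu] at hadd
      omega
    have hmono : monomial u a = monomial u' a * X k := by
      rw [← pow_one (X k : MvPolynomial (Fin s) (Polynomial K)), X_pow_eq_monomial,
        monomial_mul, mul_one, huu]
    rw [evalH_monomial, hmono, map_mul, show shY T (X k) = X k + C (T k) from by simp [shY],
      mul_add, coeff_add, coeff_mul_X']
    have hC : coeff i (shY T (monomial u' a) * C (T k)) = T k * coeff i (shY T (monomial u' a)) := by
      rw [mul_comm, coeff_C_mul]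
    rw [hC, ih u' hu'sum a i, evalH_monomial]
    by_cases hrest : ∀ t, t ≠ k → i t ≤ u' t
    · -- main case
      have h1 : (if k ∈ i.support then coeff (i - δ) (shY T (monomial u' a)) else 0)
          = if i k = 0 then 0 else
              ((∏ t, (u' t).choose ((i - δ) t) : ℕ) : Polynomial K)
                * (a * ∏ t, T t ^ (u' t - (i - δ) t)) := by
        by_cases hik : i k = 0
        · rw [if_neg (by simp [Finsupp.mem_support_iff, hik]), if_pos hik]
        · have hkey := key_if T a k (i - δ) u' (fun t ht => by
            rw [hiδt t ht]; exact hrest t ht)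
          rw [if_pos (Finsupp.mem_support_iff.mpr hik), if_neg hik, ih u' hu'sum a (i - δ),
            evalH_monomial, hkey]
      rw [h1, key_if T a k i u' hrest,
        key_if T a k i u (fun t ht => le_trans (hrest t ht) (by rw [hu't t ht]))]
      -- extract the k-th factor from all products
      have ext1 : ∀ (v w : Fin s →₀ ℕ),
          (∏ t, (v t).choose (w t)) = (v k).choose (w k) * ∏ t ∈ Finset.univ.erase k,
            (v t).choose (w t) :=
        fun v w => (Finset.mul_prod_erase _ _ (Finset.mem_univ k)).symm
      have ext2 : ∀ (v w : Fin s →₀ ℕ),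
          (∏ t, T t ^ (v t - w t)) = T k ^ (v k - w k) * ∏ t ∈ Finset.univ.erase k,
            T t ^ (v t - w t) :=
        fun v w => (Finset.mul_prod_erase _ _ (Finset.mem_univ k)).symm
      rw [ext1 u' (i - δ), ext1 u' i, ext1 u i, ext2 u' (i - δ), ext2 u' i, ext2 u i]
      have pe1 : ∏ t ∈ Finset.univ.erase k, (u' t).choose ((i - δ) t)
          = ∏ t ∈ Finset.univ.erase k, (u' t).choose (i t) :=
        Finset.prod_congr rfl fun t ht => by rw [hiδt t (Finset.ne_of_mem_erase ht)]
      have pe2 : ∏ t ∈ Finset.univ.erase k, (u t).choose (i t)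
          = ∏ t ∈ Finset.univ.erase k, (u' t).choose (i t) :=
        Finset.prod_congr rfl fun t ht => by rw [hu't t (Finset.ne_of_mem_erase ht)]
      have pe3 : ∏ t ∈ Finset.univ.erase k, T t ^ (u' t - (i - δ) t)
          = ∏ t ∈ Finset.univ.erase k, T t ^ (u' t - i t) :=
        Finset.prod_congr rfl fun t ht => by rw [hiδt t (Finset.ne_of_mem_erase ht)]
      have pe4 : ∏ t ∈ Finset.univ.erase k, T t ^ (u t - i t)
          = ∏ t ∈ Finset.univ.erase k, T t ^ (u' t - i t) :=
        Finset.prod_congr rfl fun t ht => by rw [hu't t (Finset.ne_of_mem_erase ht)]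
      rw [pe1, pe2, pe3, pe4, hiδk, hu'k]
      have hcomb := combine (T k)
        ((∏ t ∈ Finset.univ.erase k, (u' t).choose (i t) : ℕ) : Polynomial K)
        (∏ t ∈ Finset.univ.erase k, T t ^ (u' t - i t)) a (u' k) (i k)
      push_cast at hcomb ⊢
      linear_combination hcomb
    · -- degenerate case: all conditions false
      push_neg at hrest
      obtain ⟨t₀, ht₀k, ht₀⟩ := hrest
      have c1 : ¬ i - δ ≤ u' := by
        intro hle
        have := Finsupp.le_def.mp hle t₀
        rw [hiδt t₀ ht₀k] at this
        omega
      have c2 : ¬ i ≤ u' := by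
        intro hle
        have := Finsupp.le_def.mp hle t₀
        omega
      have c3 : ¬ i ≤ u := by
        intro hle
        have := Finsupp.le_def.mp hle t₀
        rw [hu't t₀ ht₀k] at this
        omega
      rw [if_neg c2, if_neg c3]
      have h1 : (if k ∈ i.support then coeff (i - δ) (shY T (monomial u' a)) else 0) = 0 := by
        split_ifs with h
        · rw [ih u' hu'sum a (i - δ), evalH_monomial, if_neg c1]
        · rfl
      rw [h1]
      ring

theorem coeff_shY (T : Fin s → Polynomial K) (P : MvPolynomial (Fin s) (Polynomial K))
    (i : Fin s →₀ ℕ) :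
    coeff i (shY T P) = MvPolynomial.eval T (mvHasseDeriv i P) := by
  induction P using MvPolynomial.induction_on' with
  | monomial u a => exact coeff_shY_monomial T _ u rfl a i
  | add p q hp hq => rw [map_add, coeff_add, mvHasseDeriv_add, map_add, hp, hq]

theorem vanish_shY (m : ℕ) (P : MvPolynomial (Fin s) (Polynomial K)) (T : Fin s → Polynomial K)
    (hT : ∀ k, Polynomial.X ∣ T k)
    (hP : ∀ j : Fin s →₀ ℕ, Polynomial.X ^ (m - (j.sum fun _ e => e)) ∣ coeff j P)
    (i : Fin s →₀ ℕ) :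
    Polynomial.X ^ (m - (i.sum fun _ e => e)) ∣ coeff i (shY T P) := by
  rw [coeff_shY]
  nth_rewrite 1 [as_sum P]
  rw [mvHasseDeriv_finsetSum, map_sum]
  apply Finset.dvd_sum
  intro j hj
  rw [evalH_monomial]
  split_ifs with hij
  · have hsj : (j.sum fun _ e => e) = ∑ t, j t := Finsupp.sum_fintype _ _ (fun t => rfl)
    have hsi : (i.sum fun _ e => e) = ∑ t, i t := Finsupp.sum_fintype _ _ (fun t => rfl)
    have hJI : ∑ t, (j t - i t) + ∑ t, i t = ∑ t, j t := by
      rw [← Finset.sum_add_distrib]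
      exact Finset.sum_congr rfl fun t _ => Nat.sub_add_cancel (Finsupp.le_def.mp hij t)
    have hd2 : (Polynomial.X : Polynomial K) ^ (∑ t, (j t - i t)) ∣ ∏ t, T t ^ (j t - i t) := by
      rw [← Finset.prod_pow_eq_pow_sum]
      exact Finset.prod_dvd_prod_of_dvd _ _ fun t _ => pow_dvd_pow_of_dvd (hT t) _
    have hle : m - (i.sum fun _ e => e)
        ≤ (m - (j.sum fun _ e => e)) + ∑ t, (j t - i t) := by
      rw [hsj, hsi] at *
      omega
    calc Polynomial.X ^ (m - (i.sum fun _ e => e))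
        ∣ Polynomial.X ^ ((m - (j.sum fun _ e => e)) + ∑ t, (j t - i t)) :=
          pow_dvd_pow _ hle
      _ = Polynomial.X ^ (m - (j.sum fun _ e => e)) * Polynomial.X ^ (∑ t, (j t - i t)) :=
          pow_add _ _ _
      _ ∣ coeff j P * ∏ t, T t ^ (j t - i t) := mul_dvd_mul (hP j) hd2
      _ ∣ _ := Dvd.dvd.mul_left dvd_rfl _
  · exact dvd_zero _

/-! ### The `X`-shift automorphism -/

noncomputable def phi (a : K) : Polynomial K →ₐ[K] Polynomial K :=
  Polynomial.aeval (Polynomial.X + Polynomial.C a)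

theorem phi_phi (a b : K) (p : Polynomial K) : phi a (phi b p) = phi (a + b) p := by
  unfold phi
  rw [← Polynomial.aeval_algHom_apply]
  congr 1
  rw [map_add, Polynomial.aeval_X, Polynomial.aeval_C, Polynomial.algebraMap_eq, add_assoc,
    ← Polynomial.C_add]

theorem phi_zero (p : Polynomial K) : phi 0 p = p := by
  simp [phi]

theorem phi_X_sub_C_self (a : K) : phi a (Polynomial.X - Polynomial.C a) = Polynomial.X := by
  simp [phi]

theorem phi_dvd (a : K) (e : ℕ) (q : Polynomial K) :
    (Polynomial.X - Polynomial.C a) ^ e ∣ q ↔ Polynomial.X ^ e ∣ phi a q := by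
  constructor
  · rintro ⟨r, rfl⟩
    exact ⟨phi a r, by rw [map_mul, map_pow, phi_X_sub_C_self]⟩
  · rintro ⟨r, hr⟩
    have h := congrArg (phi (-a)) hr
    rw [map_mul, map_pow] at h
    have hq : phi (-a) (phi a q) = q := by rw [phi_phi, neg_add_cancel, phi_zero]
    have hX : phi (-a) Polynomial.X = Polynomial.X - Polynomial.C a := by
      simp [phi, sub_eq_add_neg]
    rw [hq, hX] at h
    exact ⟨_, h⟩

theorem phi_coeff_zero (a : K) (p : Polynomial K) : (phi a p).coeff 0 = p.eval a := by
  have hcomp : phi a p = p.comp (Polynomial.X + Polynomial.C a) := by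
    rw [phi, Polynomial.aeval_def, Polynomial.algebraMap_eq]
    rfl
  rw [Polynomial.coeff_zero_eq_eval_zero, hcomp, Polynomial.eval_comp]
  simp

theorem shiftPoint_eq (a : K) (y : Fin s → K) (Q : MvPolynomial (Fin s) (Polynomial K)) :
    shiftPoint a y Q
      = shY (fun k => Polynomial.C (y k)) (MvPolynomial.map (phi a).toRingHom Q) := by
  show _ = aeval _ (MvPolynomial.map (phi a).toRingHom Q)
  rw [aeval_def, algebraMap_eq, eval₂_map]
  rfl

theorem phi_eval_mvH (a : K) (R : Fin s → Polynomial K)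
    (H : MvPolynomial (Fin s) (Polynomial K)) :
    phi a (MvPolynomial.eval R H)
      = MvPolynomial.eval (fun k => phi a (R k)) (MvPolynomial.map (phi a).toRingHom H) := by
  have h := eval₂_comp_left (phi a).toRingHom (RingHom.id (Polynomial K)) R H
  rw [RingHom.comp_id] at h
  rw [eval_map, ← eval₂_id (g := R) H]
  exact h

theorem single_point (a : K) (y : Fin s → K) (m : ℕ) (R : Fin s → Polynomial K)
    (hRy : ∀ j, (R j).eval a = y j) (Q : MvPolynomial (Fin s) (Polynomial K)) :
    VanishesAt Q a y m ↔
      ∀ i : Fin s →₀ ℕ, (Polynomial.X - Polynomial.C a) ^ (m - (i.sum fun _ e => e)) ∣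
        MvPolynomial.eval R (mvHasseDeriv i Q) := by
  set Qa := MvPolynomial.map (phi a).toRingHom Q with hQa
  set U : Fin s → Polynomial K := fun k => Polynomial.C (y k) with hU
  set R' : Fin s → Polynomial K := fun k => phi a (R k) with hR'
  set T : Fin s → Polynomial K := fun k => R' k - U k with hT
  have hTX : ∀ k, Polynomial.X ∣ T k := by
    intro k
    rw [Polynomial.X_dvd_iff, hT]
    simp only [Polynomial.coeff_sub, hR', hU, Polynomial.coeff_C_zero, phi_coeff_zero, hRy k,
      sub_self]
  have step1 : VanishesAt Q a y m ↔
      ∀ i : Fin s →₀ ℕ, Polynomial.X ^ (m - (i.sum fun _ e => e)) ∣ coeff i (shY U Qa) := by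
    unfold VanishesAt
    rw [shiftPoint_eq]
    constructor
    · intro h i
      rw [Polynomial.X_pow_dvd_iff]
      intro d hd
      exact h i d (by omega)
    · intro h j d hd
      exact Polynomial.X_pow_dvd_iff.mp (h j) d (by omega)
  have step3 : (∀ i : Fin s →₀ ℕ, Polynomial.X ^ (m - (i.sum fun _ e => e)) ∣
        coeff i (shY U Qa)) ↔
      (∀ i : Fin s →₀ ℕ, Polynomial.X ^ (m - (i.sum fun _ e => e)) ∣
        coeff i (shY R' Qa)) := by
    constructor
    · intro h i
      have hfun : (fun k => T k + U k) = R' := by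
        funext k
        simp only [hT]
        ring
      have heq : shY R' Qa = shY T (shY U Qa) := by
        rw [shY_shY, hfun]
      rw [heq]
      exact vanish_shY m _ T hTX h i
    · intro h i
      have hfun2 : (fun k => -T k + R' k) = U := by
        funext k
        simp only [hT]
        ring
      have heq : shY U Qa = shY (fun k => -T k) (shY R' Qa) := by
        rw [shY_shY, hfun2]
      rw [heq]
      exact vanish_shY m _ _ (fun k => (dvd_neg).mpr (hTX k)) h i
  have step2 : ∀ i : Fin s →₀ ℕ,
      ((Polynomial.X - Polynomial.C a) ^ (m - (i.sum fun _ e => e)) ∣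
          MvPolynomial.eval R (mvHasseDeriv i Q) ↔
        Polynomial.X ^ (m - (i.sum fun _ e => e)) ∣ coeff i (shY R' Qa)) := by
    intro i
    rw [phi_dvd a, phi_eval_mvH, ← mvHasseDeriv_map, ← hQa, ← hR', ← coeff_shY]
  exact step1.trans (step3.trans (forall_congr' fun i => (step2 i).symm))

end VanAux

/-- `Q` vanishes at each point `(x_i, y_{i,1},...,y_{i,s})` with multiplicity at
least `m_i` iff for every multi-index `i` with `|i| < max_r m_r`, the Hasse
derivative `Q^{[i]}(X, R_1,...,R_s)` is divisible by
`Π_{r : m_r > |i|} (X - x_r)^{m_r - |i|}`. -/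
theorem vanishing_iff_simultaneous_divisibility {K : Type*} [Field K] {s n : ℕ}
    (x : Fin n → K) (hx : Function.Injective x)
    (mm : Fin n → ℕ) (hmm : ∀ i, 0 < mm i)
    (y : Fin n → Fin s → K) (R : Fin s → Polynomial K)
    (hR : ∀ i j, Polynomial.eval (x i) (R j) = y i j)
    (Q : MvPolynomial (Fin s) (Polynomial K)) :
    (∀ i : Fin n, VanishesAt Q (x i) (y i) (mm i)) ↔
      ∀ i : Fin s →₀ ℕ, (i.sum fun _ e => e) < Finset.univ.sup mm →
        (∏ r ∈ Finset.univ.filter (fun r => (i.sum fun _ e => e) < mm r),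
            (Polynomial.X - Polynomial.C (x r)) ^ (mm r - (i.sum fun _ e => e))) ∣
          MvPolynomial.eval R (mvHasseDeriv i Q) := by
  constructor
  · intro hvan i hi
    apply Finset.prod_dvd_of_coprime
    · intro r hr r' hr' hne
      exact ((Polynomial.pairwise_coprime_X_sub_C hx) hne).pow
    · intro r hr
      exact (VanAux.single_point (x r) (y r) (mm r) R (fun j => hR r j) Q).mp (hvan r) i
  · intro hdvd r
    apply (VanAux.single_point (x r) (y r) (mm r) R (fun j => hR r j) Q).mpr
    intro i
    by_cases him : (i.sum fun _ e => e) < mm r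
    · have h1 : (i.sum fun _ e => e) < Finset.univ.sup mm :=
        lt_of_lt_of_le him (Finset.le_sup (Finset.mem_univ r))
      have hmem : r ∈ Finset.univ.filter (fun r => (i.sum fun _ e => e) < mm r) := by
        simp [him]
      exact dvd_trans
        (Finset.dvd_prod_of_mem
          (fun r => (Polynomial.X - Polynomial.C (x r)) ^ (mm r - (i.sum fun _ e => e))) hmem)
        (hdvd i h1)
    · have hz : mm r - (i.sum fun _ e => e) = 0 := by omega
      rw [hz, pow_zero]
      exact one_dvd _
end
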